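/- Let α = (α_n) be a sequence of nonnegative integers with α_n ≤ α_{n+1} and α_n ≤ n for all n, and define Q_α((x_n)) = (φ_{α_n}^n(x_{α_n}))_n. Then Q_α maps Ĵ(Φ) into Ĵ(Φ) boundedly with ‖Q_α(x)‖_J ≤ ‖x‖_J for all x ∈ Ĵ(Φ). -/
import Mathlib


open Filter Topology

/-- Composition `φ_n^m = φ_{m-1} ∘ ⋯ ∘ φ_n : X n →L X m` (junk value for `m < n`). -/
noncomputable def phiTo {X : ℕ → Type*} [∀ n, NormedAddCommGroup (X n)]
    [∀ n, NormedSpace ℝ (X n)] (φ : ∀ n, X n →L[ℝ] X (n + 1)) (n : ℕ) :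
    (m : ℕ) → X n →L[ℝ] X m
  | 0 => 0
  | m + 1 =>
    if h : m + 1 = n then by rw [h]; exact ContinuousLinearMap.id ℝ (X n)
    else (φ m).comp (phiTo φ n m)

open Classical in
/-- `σ(x,S)²`: the sum over consecutive pairs `p < q` of `S` of `‖φ_p^q(x_p) - x_q‖²`. -/
noncomputable def sigma2 {X : ℕ → Type*} [∀ n, NormedAddCommGroup (X n)]
    [∀ n, NormedSpace ℝ (X n)] (φ : ∀ n, X n →L[ℝ] X (n + 1))
    (x : ∀ n, X n) (S : Finset ℕ) : ℝ :=
  ∑ p ∈ S, ∑ q ∈ S,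
    if p < q ∧ ∀ r ∈ S, ¬(p < r ∧ r < q) then ‖phiTo φ p q (x p) - x q‖ ^ 2 else 0

noncomputable def sigmaJ {X : ℕ → Type*} [∀ n, NormedAddCommGroup (X n)]
    [∀ n, NormedSpace ℝ (X n)] (φ : ∀ n, X n →L[ℝ] X (n + 1))
    (x : ∀ n, X n) (S : Finset ℕ) : ℝ :=
  Real.sqrt (sigma2 φ x S)

/-- `ρ(x,S)² = σ(x,S)² + ‖x_{max S}‖²`. -/
noncomputable def rho2 {X : ℕ → Type*} [∀ n, NormedAddCommGroup (X n)]
    [∀ n, NormedSpace ℝ (X n)] (φ : ∀ n, X n →L[ℝ] X (n + 1))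
    (x : ∀ n, X n) (S : Finset ℕ) (hS : S.Nonempty) : ℝ :=
  sigma2 φ x S + ‖x (S.max' hS)‖ ^ 2

noncomputable def rhoJ {X : ℕ → Type*} [∀ n, NormedAddCommGroup (X n)]
    [∀ n, NormedSpace ℝ (X n)] (φ : ∀ n, X n →L[ℝ] X (n + 1))
    (x : ∀ n, X n) (S : Finset ℕ) (hS : S.Nonempty) : ℝ :=
  Real.sqrt (rho2 φ x S hS)

/-- The set of values `ρ(x,S)` over finite nonempty `S ⊆ ℕ`. -/
def rhoSet {X : ℕ → Type*} [∀ n, NormedAddCommGroup (X n)]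
    [∀ n, NormedSpace ℝ (X n)] (φ : ∀ n, X n →L[ℝ] X (n + 1))
    (x : ∀ n, X n) : Set ℝ :=
  {r : ℝ | ∃ (S : Finset ℕ) (hS : S.Nonempty), r = rhoJ φ x S hS}

/-- Membership in `Ĵ(Φ)`: `sup_S ρ(x,S) < ∞`. -/
def memJhat {X : ℕ → Type*} [∀ n, NormedAddCommGroup (X n)]
    [∀ n, NormedSpace ℝ (X n)] (φ : ∀ n, X n →L[ℝ] X (n + 1))
    (x : ∀ n, X n) : Prop :=
  BddAbove (rhoSet φ x)

/-- The norm `‖x‖_J = (1/√2) sup_S ρ(x,S)`. -/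
noncomputable def normJ {X : ℕ → Type*} [∀ n, NormedAddCommGroup (X n)]
    [∀ n, NormedSpace ℝ (X n)] (φ : ∀ n, X n →L[ℝ] X (n + 1))
    (x : ∀ n, X n) : ℝ :=
  (Real.sqrt 2)⁻¹ * sSup (rhoSet φ x)

/-- Membership in `J(Φ)`: member of `Ĵ(Φ)` with `‖x_n‖ → 0`. -/
def memJ {X : ℕ → Type*} [∀ n, NormedAddCommGroup (X n)]
    [∀ n, NormedSpace ℝ (X n)] (φ : ∀ n, X n →L[ℝ] X (n + 1))
    (x : ∀ n, X n) : Prop :=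
  memJhat φ x ∧ Tendsto (fun n => ‖x n‖) atTop (𝓝 0)

open Classical in
/-- The coordinate restriction `P_I`. -/
noncomputable def restrictSeq {X : ℕ → Type*} [∀ n, NormedAddCommGroup (X n)]
    (I : Set ℕ) (x : ∀ n, X n) : ∀ n, X n :=
  fun n => if n ∈ I then x n else 0

/-- The stepping map `Q_α`. -/
noncomputable def stepSeq {X : ℕ → Type*} [∀ n, NormedAddCommGroup (X n)]
    [∀ n, NormedSpace ℝ (X n)] (φ : ∀ n, X n →L[ℝ] X (n + 1))
    (α : ℕ → ℕ) (x : ∀ n, X n) : ∀ n, X n :=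
  fun n => phiTo φ (α n) n (x (α n))


section Aux

variable {X : ℕ → Type*} [∀ n, NormedAddCommGroup (X n)] [∀ n, NormedSpace ℝ (X n)]

lemma phiTo_norm_le (φ : ∀ n, X n →L[ℝ] X (n + 1)) (hφ : ∀ n, ‖φ n‖ ≤ 1) (n : ℕ) :
    ∀ m, ‖phiTo φ n m‖ ≤ 1 := by
  intro m
  induction m with
  | zero => simp [phiTo]
  | succ m ih =>
    rw [phiTo]
    split_ifs with h
    · subst h
      exact ContinuousLinearMap.norm_id_le
    · calc ‖(φ m).comp (phiTo φ n m)‖ ≤ ‖φ m‖ * ‖phiTo φ n m‖ :=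
            ContinuousLinearMap.opNorm_comp_le _ _
        _ ≤ 1 * 1 := mul_le_mul (hφ m) ih (norm_nonneg _) zero_le_one
        _ = 1 := one_mul 1

lemma phiTo_apply_le (φ : ∀ n, X n →L[ℝ] X (n + 1)) (hφ : ∀ n, ‖φ n‖ ≤ 1) (n m : ℕ)
    (y : X n) : ‖phiTo φ n m y‖ ≤ ‖y‖ :=
  le_trans ((phiTo φ n m).le_opNorm y)
    (mul_le_of_le_one_left (norm_nonneg y) (phiTo_norm_le φ hφ n m))

lemma phiTo_self [Subsingleton (X 0)] (φ : ∀ n, X n →L[ℝ] X (n + 1)) (a : ℕ) (y : X a) :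
    phiTo φ a a y = y := by
  cases a with
  | zero => exact Subsingleton.elim _ _
  | succ m => simp [phiTo]

lemma phiTo_comp [Subsingleton (X 0)] (φ : ∀ n, X n →L[ℝ] X (n + 1)) {c a : ℕ}
    (h1 : c ≤ a) : ∀ {b : ℕ}, a ≤ b → ∀ y : X c, phiTo φ a b (phiTo φ c a y) = phiTo φ c b y := by
  intro b
  induction b with
  | zero =>
    intro hb y
    interval_cases a
    simp [phiTo]
  | succ m ih =>
    intro hb y
    rw [phiTo]
    split_ifs with h
    · subst h
      simp [phiTo_self]
    · have ha : a ≤ m := by omega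
      have hc : ¬ (m + 1 = c) := by omega
      rw [ContinuousLinearMap.comp_apply, ih ha]
      conv_rhs => rw [phiTo]
      rw [dif_neg hc, ContinuousLinearMap.comp_apply]

lemma step_diff [Subsingleton (X 0)] (φ : ∀ n, X n →L[ℝ] X (n + 1))
    (α : ℕ → ℕ) (hα : Monotone α) (hαn : ∀ n, α n ≤ n) {p q : ℕ} (hpq : p ≤ q)
    (x : ∀ n, X n) :
    phiTo φ p q (stepSeq φ α x p) - stepSeq φ α x q
      = phiTo φ (α q) q (phiTo φ (α p) (α q) (x (α p)) - x (α q)) := by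
  simp only [stepSeq]
  rw [map_sub, phiTo_comp φ (hαn p) hpq, phiTo_comp φ (hα hpq) (hαn q)]

lemma cons_image {α : ℕ → ℕ} (hα : Monotone α) {S : Finset ℕ} {p q : ℕ}
    (h : p < q ∧ ∀ r ∈ S, ¬(p < r ∧ r < q)) (hlt : α p < α q) :
    α p < α q ∧ ∀ r ∈ S.image α, ¬(α p < r ∧ r < α q) := by
  refine ⟨hlt, ?_⟩
  rintro r hr ⟨h1, h2⟩
  obtain ⟨s, hs, rfl⟩ := Finset.mem_image.mp hr
  have hps : p < s := by
    by_contra hc; push_neg at hc; exact absurd (hα hc) (not_le.mpr h1)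
  have hsq : s < q := by
    by_contra hc; push_neg at hc; exact absurd (hα hc) (not_le.mpr h2)
  exact h.2 s hs ⟨hps, hsq⟩

open Classical in
lemma sigma2_step_le [Subsingleton (X 0)] (φ : ∀ n, X n →L[ℝ] X (n + 1))
    (hφ : ∀ n, ‖φ n‖ ≤ 1) (α : ℕ → ℕ) (hα : Monotone α) (hαn : ∀ n, α n ≤ n)
    (x : ∀ n, X n) (S : Finset ℕ) :
    sigma2 φ (stepSeq φ α x) S ≤ sigma2 φ x (S.image α) := by
  classical
  set G : ℕ → ℕ → ℝ := fun u v => ‖phiTo φ u v (x u) - x v‖ ^ 2 with hG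
  have step1 : sigma2 φ (stepSeq φ α x) S ≤
      ∑ p ∈ S, ∑ q ∈ S, if (p < q ∧ ∀ r ∈ S, ¬(p < r ∧ r < q)) ∧ α p < α q
        then G (α p) (α q) else 0 := by
    rw [sigma2]
    refine Finset.sum_le_sum fun p hp => Finset.sum_le_sum fun q hq => ?_
    by_cases hc : p < q ∧ ∀ r ∈ S, ¬(p < r ∧ r < q)
    · rw [if_pos hc]
      have hkey : ‖phiTo φ p q (stepSeq φ α x p) - stepSeq φ α x q‖ ^ 2 ≤ G (α p) (α q) := by
        rw [step_diff φ α hα hαn hc.1.le x]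
        exact pow_le_pow_left₀ (norm_nonneg _)
          (phiTo_apply_le φ hφ (α q) q (phiTo φ (α p) (α q) (x (α p)) - x (α q))) 2
      by_cases hlt : α p < α q
      · rw [if_pos ⟨hc, hlt⟩]; exact hkey
      · rw [if_neg (by tauto)]
        have heq : α p = α q := le_antisymm (hα hc.1.le) (not_lt.mp hlt)
        refine le_trans hkey ?_
        simp [hG, heq, phiTo_self]
    · rw [if_neg hc, if_neg (by tauto)]
  refine le_trans step1 ?_
  have hrhs : sigma2 φ x (S.image α) =
      ∑ uv ∈ ((S.image α) ×ˢ (S.image α)).filter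
        (fun uv => uv.1 < uv.2 ∧ ∀ r ∈ S.image α, ¬(uv.1 < r ∧ r < uv.2)),
        G uv.1 uv.2 := by
    rw [sigma2, ← Finset.sum_product', Finset.sum_filter]
  rw [hrhs, ← Finset.sum_product', Finset.sum_ite, Finset.sum_const_zero, add_zero]
  set s := (S ×ˢ S).filter
    (fun pq => (pq.1 < pq.2 ∧ ∀ r ∈ S, ¬(pq.1 < r ∧ r < pq.2)) ∧ α pq.1 < α pq.2) with hs
  have hinj : ∀ a ∈ s, ∀ b ∈ s, (α a.1, α a.2) = (α b.1, α b.2) → a = b := by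
    rintro ⟨p, q⟩ ha ⟨p', q'⟩ hb heq
    simp only [hs, Finset.mem_filter, Finset.mem_product] at ha hb
    obtain ⟨⟨hpS, hqS⟩, ⟨hpq, hcons⟩, hlt⟩ := ha
    obtain ⟨⟨hpS', hqS'⟩, ⟨hpq', hcons'⟩, hlt'⟩ := hb
    have e1 : α p = α p' := congrArg Prod.fst heq
    have e2 : α q = α q' := congrArg Prod.snd heq
    have hpp : p = p' := by
      by_contra hne
      rcases lt_or_gt_of_ne hne with h | h
      · have hq : q ≤ p' := not_lt.mp (fun hh => hcons p' hpS' ⟨h, hh⟩)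
        have h2 : α q ≤ α p' := hα hq
        omega
      · have hq : q' ≤ p := not_lt.mp (fun hh => hcons' p hpS ⟨h, hh⟩)
        have h2 : α q' ≤ α p := hα hq
        omega
    subst hpp
    have hqq : q = q' := by
      rcases lt_trichotomy q q' with h | h | h
      · exact absurd ⟨hpq, h⟩ (hcons' q hqS)
      · exact h
      · exact absurd ⟨hpq', h⟩ (hcons q' hqS')
    subst hqq
    rfl
  calc ∑ pq ∈ s, G (α pq.1) (α pq.2)
      = ∑ uv ∈ s.image (fun pq => (α pq.1, α pq.2)), G uv.1 uv.2 :=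
        (Finset.sum_image (f := fun uv : ℕ × ℕ => G uv.1 uv.2) hinj).symm
    _ ≤ _ := by
        refine Finset.sum_le_sum_of_subset_of_nonneg ?_ (fun i _ _ => by positivity)
        intro uv huv
        obtain ⟨⟨p, q⟩, hpq, rfl⟩ := Finset.mem_image.mp huv
        simp only [hs, Finset.mem_filter, Finset.mem_product] at hpq
        obtain ⟨⟨hpS, hqS⟩, hcons, hlt⟩ := hpq
        refine Finset.mem_filter.mpr ⟨Finset.mem_product.mpr
          ⟨Finset.mem_image_of_mem α hpS, Finset.mem_image_of_mem α hqS⟩, ?_⟩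
        exact cons_image hα hcons hlt

lemma rhoJ_step_le [Subsingleton (X 0)] (φ : ∀ n, X n →L[ℝ] X (n + 1))
    (hφ : ∀ n, ‖φ n‖ ≤ 1) (α : ℕ → ℕ) (hα : Monotone α) (hαn : ∀ n, α n ≤ n)
    (x : ∀ n, X n) (S : Finset ℕ) (hS : S.Nonempty) :
    rhoJ φ (stepSeq φ α x) S hS ≤ rhoJ φ x (S.image α) (hS.image α) := by
  refine Real.sqrt_le_sqrt ?_
  rw [rho2, rho2]
  have hmax : (S.image α).max' (hS.image α) = α (S.max' hS) := by
    rw [Finset.max'_image hα]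
  refine add_le_add (sigma2_step_le φ hφ α hα hαn x S) ?_
  rw [hmax]
  refine pow_le_pow_left₀ (norm_nonneg _) ?_ 2
  exact phiTo_apply_le φ hφ _ _ _

end Aux

/-- for a nondecreasing `α` with `α_n ≤ n`, `Q_α` maps `Ĵ(Φ)` into
itself with `‖Q_α(x)‖_J ≤ ‖x‖_J`. -/
theorem stmt11 {X : ℕ → Type*} [∀ n, NormedAddCommGroup (X n)] [∀ n, NormedSpace ℝ (X n)]
    [∀ n, CompleteSpace (X n)] [Subsingleton (X 0)]
    (φ : ∀ n, X n →L[ℝ] X (n + 1)) (hφ : ∀ n, ‖φ n‖ ≤ 1)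
    (α : ℕ → ℕ) (hα : Monotone α) (hαn : ∀ n, α n ≤ n) :
    ∀ x : ∀ n, X n, memJhat φ x →
      memJhat φ (stepSeq φ α x) ∧ normJ φ (stepSeq φ α x) ≤ normJ φ x := by
  intro x hx
  have key : ∀ r ∈ rhoSet φ (stepSeq φ α x), ∃ r' ∈ rhoSet φ x, r ≤ r' := by
    rintro r ⟨S, hS, rfl⟩
    exact ⟨rhoJ φ x (S.image α) (hS.image α),
      ⟨S.image α, hS.image α, rfl⟩, rhoJ_step_le φ hφ α hα hαn x S hS⟩
  have hbdd : memJhat φ (stepSeq φ α x) := by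
    obtain ⟨M, hM⟩ := hx
    exact ⟨M, fun r hr => by obtain ⟨r', hr', hle⟩ := key r hr; exact hle.trans (hM hr')⟩
  refine ⟨hbdd, ?_⟩
  rw [normJ, normJ]
  refine mul_le_mul_of_nonneg_left ?_ (by positivity)
  have hne : (rhoSet φ (stepSeq φ α x)).Nonempty :=
    ⟨rhoJ φ (stepSeq φ α x) {0} ⟨0, Finset.mem_singleton_self 0⟩,
      {0}, ⟨0, Finset.mem_singleton_self 0⟩, rfl⟩
  refine csSup_le hne fun r hr => ?_
  obtain ⟨r', hr', hle⟩ := key r hr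
  exact hle.trans (le_csSup hx hr')
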